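/- Let r̃ > 1 be a natural number, c an integer with gcd(c, r̃) = 1, and Γ = {(x,y) ∈ ℤ² : x ≡ c·y (mod r̃)}. Suppose B = {(x,y) : |x| ≤ A, |y| ≤ B} with A, B ≥ 1 contains a nonzero lattice point v = (a,b) of Γ but no lattice point of Γ linearly independent from v. Then a·b ≠ 0. -/
import Mathlib


/-- If `r̃ > 1`, `gcd(c, r̃) = 1`, the box `{|x| ≤ A, |y| ≤ B}` (with `A, B ≥ 1`) contains a
nonzero lattice point `v = (a,b)` of `Γ = {(x,y) : x ≡ c·y (mod r̃)}` but no lattice point of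
`Γ` in the box is linearly independent from `v`, then `a·b ≠ 0`. -/
theorem stmt_15 (r : ℕ) (hr : 1 < r) (c : ℤ) (hc : Int.gcd c (r : ℤ) = 1) (A B : ℝ)
    (hA : 1 ≤ A) (hB : 1 ≤ B) (a b : ℤ)
    (hv : (a : ZMod r) = (c : ZMod r) * (b : ZMod r)) (hv0 : ¬(a = 0 ∧ b = 0))
    (hva : |(a : ℝ)| ≤ A) (hvb : |(b : ℝ)| ≤ B)
    (hdep : ∀ w : ℤ × ℤ, (w.1 : ZMod r) = (c : ZMod r) * (w.2 : ZMod r) →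
      |(w.1 : ℝ)| ≤ A → |(w.2 : ℝ)| ≤ B → a * w.2 - b * w.1 = 0) :
    a ≠ 0 ∧ b ≠ 0 := by
  haveI : NeZero r := ⟨by omega⟩
  obtain ⟨u, v, huv⟩ := Int.isCoprime_iff_gcd_eq_one.mpr hc
  have hcu : (u : ZMod r) * (c : ZMod r) = 1 := by
    have h := congrArg (Int.cast : ℤ → ZMod r) huv
    push_cast at h
    simpa using h
  constructor
  · intro ha
    have hb : b ≠ 0 := fun hb => hv0 ⟨ha, hb⟩
    have hb0 : (b : ZMod r) = 0 := by
      have h := congrArg ((u : ZMod r) * ·) hv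
      simp only [ha, ← mul_assoc, hcu, one_mul] at h
      simpa using h.symm
    have hrb : (r : ℤ) ∣ b := (ZMod.intCast_zmod_eq_zero_iff_dvd b r).mp hb0
    have hrle : (r : ℤ) ≤ |b| := Int.le_of_dvd (abs_pos.mpr hb) ((dvd_abs _ _).mpr hrb)
    set d : ℤ := (((u : ZMod r).val : ℤ)) with hd
    have hdcast : (d : ZMod r) = (u : ZMod r) := by
      simp [hd, ZMod.natCast_val, ZMod.intCast_cast]
    have hdlt : d < (r : ℤ) := by
      have := ZMod.val_lt (u : ZMod r)
      omega
    have hdnn : 0 ≤ d := Int.ofNat_nonneg _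
    have hdB : |(d : ℝ)| ≤ B := by
      have h1 : |(d : ℝ)| = (d : ℝ) := abs_of_nonneg (by exact_mod_cast hdnn)
      have h2 : ((r : ℤ) : ℝ) ≤ |(b : ℝ)| := by
        rw [← Int.cast_abs]; exact_mod_cast hrle
      have h3 : (d : ℝ) ≤ ((r : ℤ) : ℝ) := by exact_mod_cast hdlt.le
      linarith
    have key := hdep ⟨1, d⟩ (by
      simp only [hdcast]
      rw [mul_comm (c : ZMod r) (u : ZMod r), hcu]
      simp) (by simpa using hA) hdB
    simp only [ha] at key
    simp at key
    omega
  · intro hb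
    have ha : a ≠ 0 := fun ha => hv0 ⟨ha, hb⟩
    have ha0 : (a : ZMod r) = 0 := by simp [hv, hb]
    have hra : (r : ℤ) ∣ a := (ZMod.intCast_zmod_eq_zero_iff_dvd a r).mp ha0
    have hrle : (r : ℤ) ≤ |a| := Int.le_of_dvd (abs_pos.mpr ha) ((dvd_abs _ _).mpr hra)
    set e : ℤ := (((c : ZMod r).val : ℤ)) with he
    have hecast : (e : ZMod r) = (c : ZMod r) := by
      simp [he, ZMod.natCast_val, ZMod.intCast_cast]
    have helt : e < (r : ℤ) := by
      have := ZMod.val_lt (c : ZMod r)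
      omega
    have henn : 0 ≤ e := Int.ofNat_nonneg _
    have heA : |(e : ℝ)| ≤ A := by
      have h1 : |(e : ℝ)| = (e : ℝ) := abs_of_nonneg (by exact_mod_cast henn)
      have h2 : ((r : ℤ) : ℝ) ≤ |(a : ℝ)| := by
        rw [← Int.cast_abs]; exact_mod_cast hrle
      have h3 : (e : ℝ) ≤ ((r : ℤ) : ℝ) := by exact_mod_cast helt.le
      linarith
    have key := hdep ⟨e, 1⟩ (by simp [hecast]) heA (by simpa using hB)
    simp only [hb] at key
    simp at key
    omega
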